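/- arXiv:2411.04456 — 2 statements merged into one kernel-verified Lean document; each statement's English description precedes it below -/
import Mathlib

section
/- Let H, E, ι, λ > 0 and f ∈ H be as in the context. If ‖f‖_{E*} ≤ 1/(2λ), then for every u ∈ E one has ‖u‖_E + λ‖f − ι(u)‖_H² ≥ λ‖f‖_H²; that is, the functional ‖u‖_E + λ‖v‖_H² over decompositions f = ι(u) + v attains its minimum at u = 0, v = f. -/
open MeasureTheory

noncomputable section

/-- The dual norm `‖f‖_{E*} = sup { ⟨f, ι e⟩ : ‖e‖ ≤ 1 }` of `f ∈ H` relative to the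
continuous embedding `ι : E → H`. -/
def dualNorm {E H : Type*} [NormedAddCommGroup E] [NormedSpace ℝ E]
    [NormedAddCommGroup H] [InnerProductSpace ℝ H] (ι : E →L[ℝ] H) (f : H) : ℝ :=
  sSup {r : ℝ | ∃ e : E, ‖e‖ ≤ 1 ∧ r = inner ℝ f (ι e)}

lemma inner_le_dualNorm {E H : Type*} [NormedAddCommGroup E] [NormedSpace ℝ E]
    [NormedAddCommGroup H] [InnerProductSpace ℝ H] (ι : E →L[ℝ] H) (f : H) (u : E) :
    (inner ℝ f (ι u) : ℝ) ≤ dualNorm ι f * ‖u‖ := by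
  have hbdd : BddAbove {r : ℝ | ∃ e : E, ‖e‖ ≤ 1 ∧ r = inner ℝ f (ι e)} := by
    refine ⟨‖f‖ * ‖ι‖, ?_⟩
    rintro r ⟨e, he, rfl⟩
    calc (inner ℝ f (ι e) : ℝ) ≤ ‖f‖ * ‖ι e‖ := real_inner_le_norm f (ι e)
      _ ≤ ‖f‖ * (‖ι‖ * ‖e‖) := by
          have := ι.le_opNorm e
          nlinarith [norm_nonneg f]
      _ ≤ ‖f‖ * ‖ι‖ := by nlinarith [mul_nonneg (norm_nonneg f) (norm_nonneg ι), he]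
  rcases eq_or_ne u 0 with rfl | hu
  · simp only [map_zero, inner_zero_right, norm_zero, mul_zero, le_refl]
  · have hnorm : (0:ℝ) < ‖u‖ := norm_pos_iff.mpr hu
    have hmem : (inner ℝ f (ι ((‖u‖)⁻¹ • u)) : ℝ) ∈
        {r : ℝ | ∃ e : E, ‖e‖ ≤ 1 ∧ r = inner ℝ f (ι e)} := by
      exact ⟨(‖u‖)⁻¹ • u, by
        rw [norm_smul, norm_inv, norm_norm, inv_mul_cancel₀ hnorm.ne'], rfl⟩
    have hle := le_csSup hbdd hmem
    have : (inner ℝ f (ι ((‖u‖)⁻¹ • u)) : ℝ) = (‖u‖)⁻¹ * inner ℝ f (ι u) := by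
      rw [ι.map_smul, real_inner_smul_right]
    rw [this] at hle
    have := mul_le_mul_of_nonneg_right hle hnorm.le
    rwa [inv_mul_eq_div, div_mul_cancel₀ _ hnorm.ne'] at this

/-- if `‖f‖_{E*} ≤ 1/(2λ)`, then for every `u ∈ E`,
`‖u‖_E + λ‖f − ι u‖² ≥ λ‖f‖²`, i.e. the minimum is attained at `u = 0`, `v = f`. -/
theorem stmt1 {E H : Type*} [NormedAddCommGroup E] [NormedSpace ℝ E]
    [NormedAddCommGroup H] [InnerProductSpace ℝ H]
    (ι : E →L[ℝ] H) (hι : Function.Injective ι)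
    (lam : ℝ) (hlam : 0 < lam) (f : H)
    (hf : dualNorm ι f ≤ 1 / (2 * lam)) :
    ∀ u : E, ‖u‖ + lam * ‖f - ι u‖ ^ 2 ≥ lam * ‖f‖ ^ 2 := by
  intro u
  have hexp : ‖f - ι u‖ ^ 2 = ‖f‖ ^ 2 - 2 * inner ℝ f (ι u) + ‖ι u‖ ^ 2 := by
    rw [← real_inner_self_eq_norm_sq, ← real_inner_self_eq_norm_sq,
      ← real_inner_self_eq_norm_sq, inner_sub_sub_self]
    rw [real_inner_comm (ι u) f]
    ring
  have h1 : (inner ℝ f (ι u) : ℝ) ≤ dualNorm ι f * ‖u‖ := inner_le_dualNorm ι f u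
  have h2 : (inner ℝ f (ι u) : ℝ) ≤ (1 / (2 * lam)) * ‖u‖ := by
    have := norm_nonneg u
    nlinarith [inner_le_dualNorm ι f u]
  have h3 : 2 * lam * (inner ℝ f (ι u) : ℝ) ≤ ‖u‖ := by
    have h := mul_le_mul_of_nonneg_left h2 (by positivity : (0:ℝ) ≤ 2 * lam)
    have hne : (2 * lam) ≠ 0 := by positivity
    calc 2 * lam * (inner ℝ f (ι u) : ℝ) ≤ 2 * lam * (1 / (2 * lam) * ‖u‖) := h
      _ = ‖u‖ := by field_simp
  have h4 : (0:ℝ) ≤ lam * ‖ι u‖ ^ 2 := by positivity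
  rw [hexp]
  nlinarith [h3, h4]

end
end

section
/- Let H, E, ι, λ > 0 and f ∈ H be as in the context, and suppose ‖f‖_{E*} > 1/(2λ). If u₀ ∈ E minimizes the functional u ↦ ‖u‖_E + λ‖f − ι(u)‖_H² over E, then v := f − ι(u₀) satisfies ‖v‖_{E*} = 1/(2λ) and ⟨ι(u₀), v⟩_H = (1/(2λ))‖u₀‖_E. -/
open MeasureTheory

noncomputable section

/-- Limit helper: if `a ≤ b + c * t` for all small positive `t`, then `a ≤ b`. -/
lemma aux_limit (a b c : ℝ) (h : ∀ t : ℝ, 0 < t → t < 1 → a ≤ b + c * t) :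
    a ≤ b := by
  refine le_of_forall_pos_le_add fun ε hε => ?_
  rcases le_or_gt c 0 with hc | hc
  · have h2 := h (1/2) (by norm_num) (by norm_num)
    nlinarith
  · have ht0 : 0 < min (ε / c) (1/2) := lt_min (by positivity) (by norm_num)
    have ht1 : min (ε / c) (1/2) < 1 := lt_of_le_of_lt (min_le_right _ _) (by norm_num)
    have h2 := h _ ht0 ht1
    have hle : c * min (ε / c) (1/2) ≤ ε := by
      calc c * min (ε / c) (1/2) ≤ c * (ε / c) :=
            mul_le_mul_of_nonneg_left (min_le_left _ _) hc.le
        _ = ε := by field_simp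
    linarith

/-- if `‖f‖_{E*} > 1/(2λ)` and `u₀` minimizes
`u ↦ ‖u‖_E + λ‖f − ι u‖²`, then `v = f − ι u₀` satisfies `‖v‖_{E*} = 1/(2λ)` and
`⟨ι u₀, v⟩ = (1/(2λ)) ‖u₀‖_E`. -/
theorem stmt2 {E H : Type*} [NormedAddCommGroup E] [NormedSpace ℝ E]
    [NormedAddCommGroup H] [InnerProductSpace ℝ H]
    (ι : E →L[ℝ] H) (hι : Function.Injective ι)
    (lam : ℝ) (hlam : 0 < lam) (f : H)
    (hf : 1 / (2 * lam) < dualNorm ι f) (u₀ : E)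
    (hmin : ∀ u : E, ‖u₀‖ + lam * ‖f - ι u₀‖ ^ 2 ≤ ‖u‖ + lam * ‖f - ι u‖ ^ 2) :
    dualNorm ι (f - ι u₀) = 1 / (2 * lam) ∧
      (inner ℝ (ι u₀) (f - ι u₀) : ℝ) = (1 / (2 * lam)) * ‖u₀‖ := by
  set v : H := f - ι u₀ with hv
  -- boundedness of the defining set
  have hS_bdd : BddAbove {r : ℝ | ∃ e : E, ‖e‖ ≤ 1 ∧ r = inner ℝ v (ι e)} := by
    refine ⟨‖v‖ * ‖ι‖, ?_⟩
    rintro r ⟨e, he, rfl⟩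
    calc (inner ℝ v (ι e) : ℝ) ≤ ‖v‖ * ‖ι e‖ := real_inner_le_norm _ _
      _ ≤ ‖v‖ * (‖ι‖ * ‖e‖) := by
          exact mul_le_mul_of_nonneg_left (ι.le_opNorm e) (norm_nonneg v)
      _ ≤ ‖v‖ * (‖ι‖ * 1) := by
          have := mul_le_mul_of_nonneg_left he (norm_nonneg ι)
          exact mul_le_mul_of_nonneg_left this (norm_nonneg v)
      _ = ‖v‖ * ‖ι‖ := by ring
  have hS_ne : ({r : ℝ | ∃ e : E, ‖e‖ ≤ 1 ∧ r = inner ℝ v (ι e)}).Nonempty := by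
    exact ⟨0, 0, by simp, by simp⟩
  -- Key A: every element of the set is ≤ 1/(2λ)
  have keyA : ∀ e : E, ‖e‖ ≤ 1 → (inner ℝ v (ι e) : ℝ) ≤ 1 / (2 * lam) := by
    intro e he
    have h1 : ∀ t : ℝ, 0 < t → t < 1 →
        2 * lam * (inner ℝ v (ι e) : ℝ) ≤ 1 + (lam * ‖ι e‖ ^ 2) * t := by
      intro t ht ht1
      have hm := hmin (u₀ + t • e)
      have hexp : f - ι (u₀ + t • e) = v - t • ι e := by
        simp only [map_add, _root_.map_smul, hv]
        abel
      rw [hexp] at hm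
      have hsq : ‖v - t • ι e‖ ^ 2
          = ‖v‖ ^ 2 - 2 * (t * (inner ℝ v (ι e) : ℝ)) + t ^ 2 * ‖ι e‖ ^ 2 := by
        rw [norm_sub_sq_real, real_inner_smul_right, norm_smul, Real.norm_eq_abs,
          mul_pow, sq_abs]
      have htri : ‖u₀ + t • e‖ ≤ ‖u₀‖ + t := by
        calc ‖u₀ + t • e‖ ≤ ‖u₀‖ + ‖t • e‖ := norm_add_le _ _
          _ = ‖u₀‖ + |t| * ‖e‖ := by rw [norm_smul, Real.norm_eq_abs]
          _ ≤ ‖u₀‖ + t := by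
              rw [abs_of_pos ht]
              nlinarith
      rw [hsq] at hm
      nlinarith [hm, htri, mul_pos hlam ht]
    have h2 : 2 * lam * (inner ℝ v (ι e) : ℝ) ≤ 1 := aux_limit _ _ _ h1
    rw [le_div_iff₀ (by positivity)]
    nlinarith
  -- Key B: 2λ ⟨v, ι u₀⟩ = ‖u₀‖
  have keyB : 2 * lam * (inner ℝ v (ι u₀) : ℝ) = ‖u₀‖ := by
    have hb1 : ∀ s : ℝ, 0 < s → s < 1 →
        f - ι ((1 - s) • u₀) = v + s • ι u₀ ∧ f - ι ((1 + s) • u₀) = v - s • ι u₀ := by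
      intro s _ _
      constructor
      · simp only [hv, sub_smul, add_smul, one_smul, map_add, map_sub, _root_.map_smul]
        abel
      · simp only [hv, sub_smul, add_smul, one_smul, map_add, map_sub, _root_.map_smul]
        abel
    have hdir1 : ‖u₀‖ ≤ 2 * lam * (inner ℝ v (ι u₀) : ℝ) := by
      refine aux_limit _ _ (lam * ‖ι u₀‖ ^ 2) fun s hs hs1 => ?_
      have hm := hmin ((1 - s) • u₀)
      rw [(hb1 s hs hs1).1] at hm
      have hsq : ‖v + s • ι u₀‖ ^ 2
          = ‖v‖ ^ 2 + 2 * (s * (inner ℝ v (ι u₀) : ℝ)) + s ^ 2 * ‖ι u₀‖ ^ 2 := by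
        rw [norm_add_sq_real, real_inner_smul_right, norm_smul, Real.norm_eq_abs,
          mul_pow, sq_abs]
      have hnm : ‖(1 - s) • u₀‖ = (1 - s) * ‖u₀‖ := by
        rw [norm_smul, Real.norm_eq_abs, abs_of_pos (by linarith)]
      rw [hsq, hnm] at hm
      nlinarith [hm, norm_nonneg u₀]
    have hdir2 : 2 * lam * (inner ℝ v (ι u₀) : ℝ) ≤ ‖u₀‖ := by
      refine aux_limit _ _ (lam * ‖ι u₀‖ ^ 2) fun s hs hs1 => ?_
      have hm := hmin ((1 + s) • u₀)
      rw [(hb1 s hs hs1).2] at hm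
      have hsq : ‖v - s • ι u₀‖ ^ 2
          = ‖v‖ ^ 2 - 2 * (s * (inner ℝ v (ι u₀) : ℝ)) + s ^ 2 * ‖ι u₀‖ ^ 2 := by
        rw [norm_sub_sq_real, real_inner_smul_right, norm_smul, Real.norm_eq_abs,
          mul_pow, sq_abs]
      have hnm : ‖(1 + s) • u₀‖ = (1 + s) * ‖u₀‖ := by
        rw [norm_smul, Real.norm_eq_abs, abs_of_pos (by linarith)]
      rw [hsq, hnm] at hm
      nlinarith [hm, norm_nonneg u₀]
    linarith
  -- upper bound on dual norm
  have hupper : dualNorm ι v ≤ 1 / (2 * lam) := by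
    refine csSup_le hS_ne ?_
    rintro r ⟨e, he, rfl⟩
    exact keyA e he
  -- u₀ ≠ 0
  have hu₀ : u₀ ≠ 0 := by
    intro h
    rw [hv, h] at hupper
    simp only [map_zero, sub_zero] at hupper
    linarith
  have hnu : (0 : ℝ) < ‖u₀‖ := norm_pos_iff.mpr hu₀
  -- lower bound on dual norm
  have hmem : (1 / (2 * lam)) ∈ {r : ℝ | ∃ e : E, ‖e‖ ≤ 1 ∧ r = inner ℝ v (ι e)} := by
    refine ⟨‖u₀‖⁻¹ • u₀, ?_, ?_⟩
    · rw [norm_smul, Real.norm_eq_abs, abs_of_pos (by positivity), inv_mul_cancel₀ hnu.ne']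
    · rw [_root_.map_smul, real_inner_smul_right]
      field_simp
      linarith [keyB]
  have hlower : 1 / (2 * lam) ≤ dualNorm ι v := le_csSup hS_bdd hmem
  refine ⟨le_antisymm hupper hlower, ?_⟩
  rw [real_inner_comm]
  field_simp
  linarith [keyB]

end
end
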